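/- arXiv:1308.5312 — 5 statements merged into one kernel-verified Lean document; each statement's English description precedes it below -/
import Mathlib

section
/- For all real x, Φ*^(a)(x) ≤ Φ*^(b)(x) ≤ √2 · Φ*^(a)(x), where Φ*^(a)(x) = (1+|x|)log(1+|x|) − |x| and Φ*^(b)(x) = |x|·arcsinh|x| − √(1+x²) + 1. -/
/-- Young conjugate of `e^|y| - 1 - |y|`. -/
noncomputable def PhiStarA (x : ℝ) : ℝ := (1 + |x|) * Real.log (1 + |x|) - |x|

/-- Young conjugate of `cosh y - 1`. -/
noncomputable def PhiStarB (x : ℝ) : ℝ := |x| * Real.arsinh |x| - Real.sqrt (1 + x ^ 2) + 1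

open Real

private lemma sqrt_pos' (t : ℝ) : 0 < Real.sqrt (1 + t ^ 2) :=
  Real.sqrt_pos.2 (by positivity)

private lemma one_le_sqrt' (t : ℝ) : 1 ≤ Real.sqrt (1 + t ^ 2) := by
  have hs := Real.sq_sqrt (show (0:ℝ) ≤ 1 + t ^ 2 by positivity)
  nlinarith [Real.sqrt_nonneg (1 + t ^ 2), sq_nonneg t]

/-- `log (1+t) ≤ arsinh t` for `t ≥ 0`. -/
private lemma log_le_arsinh {t : ℝ} (ht : 0 ≤ t) : Real.log (1 + t) ≤ Real.arsinh t := by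
  rw [Real.arsinh]
  apply Real.log_le_log (by linarith)
  have := one_le_sqrt' t
  linarith

private lemma hasDerivAt_log1p {t : ℝ} (ht : (0:ℝ) < 1 + t) :
    HasDerivAt (fun u : ℝ => Real.log (1 + u)) (1 / (1 + t)) t := by
  have h : HasDerivAt (fun u : ℝ => 1 + u) 1 t := (hasDerivAt_id t).const_add 1
  simpa using h.log ht.ne'

private lemma hasDerivAt_g {t : ℝ} (ht : (0:ℝ) < 1 + t) :
    HasDerivAt (fun u : ℝ => Real.sqrt 2 * Real.log (1 + u) - Real.arsinh u)
      (Real.sqrt 2 * (1 / (1 + t)) - (Real.sqrt (1 + t ^ 2))⁻¹) t :=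
  ((hasDerivAt_log1p ht).const_mul (Real.sqrt 2)).sub (Real.hasDerivAt_arsinh t)

/-- `arsinh t ≤ √2 * log (1+t)` for `t ≥ 0`. -/
private lemma arsinh_le_sqrt2_log {t : ℝ} (ht : 0 ≤ t) :
    Real.arsinh t ≤ Real.sqrt 2 * Real.log (1 + t) := by
  set g : ℝ → ℝ := fun u => Real.sqrt 2 * Real.log (1 + u) - Real.arsinh u with hg
  have hmono : MonotoneOn g (Set.Ici 0) := by
    apply monotoneOn_of_deriv_nonneg (convex_Ici 0)
    · intro u hu
      exact (hasDerivAt_g (by simp at hu; linarith)).continuousAt.continuousWithinAt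
    · intro u hu
      rw [interior_Ici] at hu
      have hu' : (0:ℝ) < 1 + u := by simp at hu; linarith
      exact (hasDerivAt_g hu').differentiableAt.differentiableWithinAt
    · intro u hu
      rw [interior_Ici] at hu
      have hu0 : (0:ℝ) < u := hu
      have hu' : (0:ℝ) < 1 + u := by linarith
      rw [(hasDerivAt_g hu').deriv]
      have hs : 0 < Real.sqrt (1 + u ^ 2) := sqrt_pos' u
      -- key: 1 + u ≤ √2 * √(1+u²)
      have key : 1 + u ≤ Real.sqrt 2 * Real.sqrt (1 + u ^ 2) := by
        rw [← Real.sqrt_mul (by norm_num : (0:ℝ) ≤ 2)]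
        rw [show (1 + u) = Real.sqrt ((1 + u) ^ 2) from (Real.sqrt_sq (by linarith)).symm]
        exact Real.sqrt_le_sqrt (by nlinarith [sq_nonneg (u - 1)])
      have : (Real.sqrt (1 + u ^ 2))⁻¹ ≤ Real.sqrt 2 * (1 / (1 + u)) := by
        rw [inv_eq_one_div, mul_one_div, div_le_div_iff₀ hs hu']
        nlinarith
      linarith
  have h0 : g 0 = 0 := by simp [hg]
  have := hmono (Set.self_mem_Ici) (Set.mem_Ici.2 ht) ht
  rw [h0] at this
  simpa [hg] using this

private lemma hasDerivAt_fa {t : ℝ} (ht : (0:ℝ) < 1 + t) :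
    HasDerivAt (fun u : ℝ => (1 + u) * Real.log (1 + u) - u) (Real.log (1 + t)) t := by
  have h1 : HasDerivAt (fun u : ℝ => 1 + u) 1 t := (hasDerivAt_id t).const_add 1
  have h := (h1.mul (hasDerivAt_log1p ht)).sub (hasDerivAt_id t)
  refine h.congr_deriv ?_
  field_simp
  ring

private lemma hasDerivAt_fb (t : ℝ) :
    HasDerivAt (fun u : ℝ => u * Real.arsinh u - Real.sqrt (1 + u ^ 2) + 1)
      (Real.arsinh t) t := by
  have hs : Real.sqrt (1 + t ^ 2) ≠ 0 := (sqrt_pos' t).ne'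
  have h1 : HasDerivAt (fun u : ℝ => u * Real.arsinh u)
      (1 * Real.arsinh t + t * (Real.sqrt (1 + t ^ 2))⁻¹) t :=
    (hasDerivAt_id t).mul (Real.hasDerivAt_arsinh t)
  have h2 : HasDerivAt (fun u : ℝ => 1 + u ^ 2) (2 * t) t := by
    simpa [mul_comm] using ((hasDerivAt_pow 2 t).const_add 1)
  have h3 : HasDerivAt (fun u : ℝ => Real.sqrt (1 + u ^ 2))
      (2 * t / (2 * Real.sqrt (1 + t ^ 2))) t := h2.sqrt (by positivity)
  have h := ((h1.sub h3).add_const 1)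
  refine h.congr_deriv ?_
  have hs2 : (0:ℝ) < Real.sqrt (1 + t ^ 2) := sqrt_pos' t
  field_simp
  ring

/-- `fa t ≤ fb t` for `t ≥ 0`. -/
private lemma fa_le_fb {t : ℝ} (ht : 0 ≤ t) :
    (1 + t) * Real.log (1 + t) - t ≤ t * Real.arsinh t - Real.sqrt (1 + t ^ 2) + 1 := by
  set F : ℝ → ℝ := fun u =>
    (u * Real.arsinh u - Real.sqrt (1 + u ^ 2) + 1) - ((1 + u) * Real.log (1 + u) - u) with hF
  have hd : ∀ u : ℝ, 0 < 1 + u →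
      HasDerivAt F (Real.arsinh u - Real.log (1 + u)) u := fun u hu =>
    (hasDerivAt_fb u).sub (hasDerivAt_fa hu)
  have hmono : MonotoneOn F (Set.Ici 0) := by
    apply monotoneOn_of_deriv_nonneg (convex_Ici 0)
    · intro u hu
      exact (hd u (by simp at hu; linarith)).continuousAt.continuousWithinAt
    · intro u hu
      rw [interior_Ici] at hu
      exact (hd u (by simp at hu; linarith)).differentiableAt.differentiableWithinAt
    · intro u hu
      rw [interior_Ici] at hu
      have hu0 : (0:ℝ) < u := hu
      rw [(hd u (by linarith)).deriv, sub_nonneg]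
      exact log_le_arsinh hu0.le
  have h0 : F 0 = 0 := by simp [hF]
  have := hmono (Set.self_mem_Ici) (Set.mem_Ici.2 ht) ht
  rw [h0] at this
  simp only [hF] at this
  linarith

/-- `fb t ≤ √2 * fa t` for `t ≥ 0`. -/
private lemma fb_le_sqrt2_fa {t : ℝ} (ht : 0 ≤ t) :
    t * Real.arsinh t - Real.sqrt (1 + t ^ 2) + 1 ≤
      Real.sqrt 2 * ((1 + t) * Real.log (1 + t) - t) := by
  set F : ℝ → ℝ := fun u =>
    Real.sqrt 2 * ((1 + u) * Real.log (1 + u) - u) -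
      (u * Real.arsinh u - Real.sqrt (1 + u ^ 2) + 1) with hF
  have hd : ∀ u : ℝ, 0 < 1 + u →
      HasDerivAt F (Real.sqrt 2 * Real.log (1 + u) - Real.arsinh u) u := fun u hu =>
    ((hasDerivAt_fa hu).const_mul (Real.sqrt 2)).sub (hasDerivAt_fb u)
  have hmono : MonotoneOn F (Set.Ici 0) := by
    apply monotoneOn_of_deriv_nonneg (convex_Ici 0)
    · intro u hu
      exact (hd u (by simp at hu; linarith)).continuousAt.continuousWithinAt
    · intro u hu
      rw [interior_Ici] at hu
      exact (hd u (by simp at hu; linarith)).differentiableAt.differentiableWithinAt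
    · intro u hu
      rw [interior_Ici] at hu
      have hu0 : (0:ℝ) < u := hu
      rw [(hd u (by linarith)).deriv, sub_nonneg]
      exact arsinh_le_sqrt2_log hu0.le
  have h0 : F 0 = 0 := by simp [hF]
  have := hmono (Set.self_mem_Ici) (Set.mem_Ici.2 ht) ht
  rw [h0] at this
  simp only [hF] at this
  linarith

theorem phiStarA_le_phiStarB_le (x : ℝ) :
    PhiStarA x ≤ PhiStarB x ∧ PhiStarB x ≤ Real.sqrt 2 * PhiStarA x := by
  have hx : 0 ≤ |x| := abs_nonneg x
  have hsq : x ^ 2 = |x| ^ 2 := (sq_abs x).symm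
  unfold PhiStarA PhiStarB
  rw [hsq]
  exact ⟨fa_le_fb hx, fb_le_sqrt2_fa hx⟩
end

section
/- The Young function Φ*(x) = (1+|x|)log(1+|x|) − |x| satisfies the Δ₂-condition with constant a²: for every a > 1 and every real x, Φ*(a·x) ≤ a²·Φ*(x). -/
open Real Set

lemma hasDerivAt_phi {t : ℝ} (ht : -1 < t) :
    HasDerivAt (fun s : ℝ => (1 + s) * Real.log (1 + s) - s) (Real.log (1 + t)) t := by
  have h1 : (0:ℝ) < 1 + t := by linarith
  have h : HasDerivAt (fun s : ℝ => 1 + s) 1 t := (hasDerivAt_id t).const_add 1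
  have hlog : HasDerivAt (fun s : ℝ => Real.log (1 + s)) (1/(1+t)) t := by
    simpa using h.log h1.ne'
  have := (h.mul hlog).sub (hasDerivAt_id t)
  exact this.congr_deriv (by rw [mul_one_div_cancel h1.ne']; ring)

lemma key (a : ℝ) (ha : 1 < a) {t : ℝ} (ht : 0 ≤ t) :
    (1 + a*t) * Real.log (1 + a*t) - a*t ≤ a^2 * ((1 + t) * Real.log (1 + t) - t) := by
  have ha0 : (0:ℝ) < a := by linarith
  set F : ℝ → ℝ := fun s => a^2 * ((1 + s) * Real.log (1 + s) - s)
    - ((1 + a*s) * Real.log (1 + a*s) - a*s) with hF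
  have hderiv : ∀ s ∈ interior (Ici (0:ℝ)),
      HasDerivAt F (a^2 * Real.log (1 + s) - a * Real.log (1 + a*s)) s := by
    intro s hs
    rw [interior_Ici] at hs
    have hs0 : (0:ℝ) < s := hs
    have h1 := (hasDerivAt_phi (by linarith : (-1:ℝ) < s)).const_mul (a^2)
    have hmul : HasDerivAt (fun s : ℝ => a * s) a s := by
      simpa using (hasDerivAt_id s).const_mul a
    have h2 : HasDerivAt (fun s : ℝ => (1 + a*s) * Real.log (1 + a*s) - a*s)
        (Real.log (1 + a*s) * a) s :=
      (hasDerivAt_phi (by nlinarith : (-1:ℝ) < a*s)).comp s hmul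
    have := h1.sub h2
    exact this.congr_deriv (by ring)
  have hcont : ContinuousOn F (Ici 0) := by
    apply ContinuousOn.sub
    · apply ContinuousOn.mul continuousOn_const
      apply ContinuousOn.sub (ContinuousOn.mul (by fun_prop) _) (by fun_prop)
      apply ContinuousOn.log (by fun_prop)
      intro s hs; have : (0:ℝ) ≤ s := hs; positivity
    · apply ContinuousOn.sub (ContinuousOn.mul (by fun_prop) _) (by fun_prop)
      apply ContinuousOn.log (by fun_prop)
      intro s hs; have h0 : (0:ℝ) ≤ s := hs; nlinarith
  have hmono : MonotoneOn F (Ici 0) := by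
    apply monotoneOn_of_deriv_nonneg (convex_Ici 0) hcont
    · intro s hs
      exact (hderiv s hs).differentiableAt.differentiableWithinAt
    · intro s hs
      rw [(hderiv s hs).deriv]
      rw [interior_Ici] at hs
      have hs0 : (0:ℝ) < s := hs
      have hlog : Real.log (1 + a*s) ≤ a * Real.log (1 + s) := by
        have hb : 1 + a * s ≤ (1 + s) ^ a :=
          one_add_mul_self_le_rpow_one_add (by linarith) ha.le
        calc Real.log (1 + a*s) ≤ Real.log ((1+s)^a) :=
              Real.log_le_log (by nlinarith) hb
          _ = a * Real.log (1 + s) := Real.log_rpow (by linarith) a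
      nlinarith
  have h0 : F 0 = 0 := by simp [hF]
  have := hmono (self_mem_Ici) (mem_Ici.mpr ht) ht
  rw [h0] at this
  simpa [hF] using this

theorem phiStarA_delta_two (a : ℝ) (ha : 1 < a) (x : ℝ) :
    PhiStarA (a * x) ≤ a ^ 2 * PhiStarA x := by
  have ha0 : (0:ℝ) < a := by linarith
  have habs : |a * x| = a * |x| := by
    rw [abs_mul, abs_of_pos ha0]
  unfold PhiStarA
  rw [habs]
  exact key a ha (abs_nonneg x)
end

section
/- The Young function Φ*(x) = |x|·arcsinh|x| − √(1+x²) + 1 satisfies: for every a > 1 and every real x, Φ*(a·x) ≤ a²·Φ*(x). -/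
open Real intervalIntegral

/-- `sinh y ≤ y * cosh y` for `y ≥ 0`. -/
lemma sinh_le_mul_cosh {y : ℝ} (hy : 0 ≤ y) : Real.sinh y ≤ y * Real.cosh y := by
  have hmono : MonotoneOn (fun t : ℝ => t * Real.cosh t - Real.sinh t) (Set.Icc 0 y) := by
    apply monotoneOn_of_deriv_nonneg (convex_Icc 0 y)
    · fun_prop
    · fun_prop
    · intro t ht
      have hd : HasDerivAt (fun t : ℝ => t * Real.cosh t - Real.sinh t)
          (1 * Real.cosh t + t * Real.sinh t - Real.cosh t) t :=
        ((hasDerivAt_id t).mul (Real.hasDerivAt_cosh t)).sub (Real.hasDerivAt_sinh t)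
      rw [hd.deriv]
      have ht0 : 0 ≤ t := (interior_subset ht : t ∈ Set.Icc 0 y).1
      nlinarith [Real.sinh_nonneg_iff.mpr ht0]
  have := hmono (Set.left_mem_Icc.mpr hy) (Set.right_mem_Icc.mpr hy) hy
  simp only [Real.sinh_zero, Real.cosh_zero, mul_one, zero_mul, sub_zero] at this
  linarith

lemma div_sqrt_le_arsinh {u : ℝ} (hu : 0 ≤ u) :
    u / Real.sqrt (1 + u ^ 2) ≤ Real.arsinh u := by
  have hy : 0 ≤ Real.arsinh u := Real.arsinh_nonneg_iff.mpr hu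
  have h := sinh_le_mul_cosh hy
  rw [Real.sinh_arsinh, Real.cosh_arsinh] at h
  have hs : 0 < Real.sqrt (1 + u ^ 2) := Real.sqrt_pos.mpr (by positivity)
  rw [div_le_iff₀ hs]
  linarith

lemma arsinh_mul_le {a u : ℝ} (ha : 1 ≤ a) (hu : 0 ≤ u) :
    Real.arsinh (a * u) ≤ a * Real.arsinh u := by
  have hmono : MonotoneOn (fun b : ℝ => b * Real.arsinh u - Real.arsinh (b * u))
      (Set.Icc 1 a) := by
    apply monotoneOn_of_deriv_nonneg (convex_Icc 1 a)
    · exact (continuousOn_id.mul continuousOn_const).sub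
        (Real.continuous_arsinh.comp_continuousOn (continuousOn_id.mul continuousOn_const))
    · exact ((differentiable_id.mul (differentiable_const _)).sub
        (Real.differentiable_arsinh.comp (differentiable_id.mul (differentiable_const _)))).differentiableOn
    · intro b hb
      have hb1 : 1 ≤ b := (interior_subset hb : b ∈ Set.Icc 1 a).1
      have hd : HasDerivAt (fun b : ℝ => b * Real.arsinh u - Real.arsinh (b * u))
          (Real.arsinh u - (Real.sqrt (1 + (b * u) ^ 2))⁻¹ * u) b := by
        have h1 : HasDerivAt (fun b : ℝ => b * u) u b := by
          simpa using (hasDerivAt_id b).mul_const u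
        have := ((hasDerivAt_id b).mul_const (Real.arsinh u)).sub
          ((Real.hasDerivAt_arsinh (b * u)).comp b h1)
        exact this.congr_deriv (by ring)
      rw [hd.deriv]
      have hsu : 0 < Real.sqrt (1 + u ^ 2) := Real.sqrt_pos.mpr (by positivity)
      have hsbu : 0 < Real.sqrt (1 + (b * u) ^ 2) := Real.sqrt_pos.mpr (by positivity)
      have hle : Real.sqrt (1 + u ^ 2) ≤ Real.sqrt (1 + (b * u) ^ 2) := by
        apply Real.sqrt_le_sqrt
        nlinarith [mul_nonneg (mul_nonneg (sub_nonneg.mpr hb1) (by linarith : (0:ℝ) ≤ b + 1)) (sq_nonneg u)]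
      have h2 : u / Real.sqrt (1 + (b * u) ^ 2) ≤ u / Real.sqrt (1 + u ^ 2) :=
        div_le_div_of_nonneg_left hu hsu hle
      have h3 := div_sqrt_le_arsinh hu
      simp only [div_eq_inv_mul] at h2 h3
      linarith
  have := hmono (Set.left_mem_Icc.mpr ha) (Set.right_mem_Icc.mpr ha) ha
  simp only [one_mul] at this
  linarith

lemma integral_arsinh_eq (x : ℝ) :
    ∫ t in (0:ℝ)..x, Real.arsinh t = x * Real.arsinh x - Real.sqrt (1 + x ^ 2) + 1 := by
  have key : ∀ t : ℝ, HasDerivAt (fun t : ℝ => t * Real.arsinh t - Real.sqrt (1 + t ^ 2))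
      (Real.arsinh t) t := by
    intro t
    have h1 : HasDerivAt (fun t : ℝ => t * Real.arsinh t)
        (1 * Real.arsinh t + t * (Real.sqrt (1 + t ^ 2))⁻¹) t :=
      (hasDerivAt_id t).mul (Real.hasDerivAt_arsinh t)
    have hinner : HasDerivAt (fun t : ℝ => 1 + t ^ 2) (2 * t) t := by
      simpa using (hasDerivAt_pow 2 t).const_add 1
    have hne : (1 : ℝ) + t ^ 2 ≠ 0 := by positivity
    have h2 : HasDerivAt (fun t : ℝ => Real.sqrt (1 + t ^ 2))
        (2 * t / (2 * Real.sqrt (1 + t ^ 2))) t :=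
      (Real.hasDerivAt_sqrt hne).comp t hinner |>.congr_deriv (by ring)
    have hs : Real.sqrt (1 + t ^ 2) ≠ 0 := by positivity
    have := h1.sub h2
    exact this.congr_deriv (by ring)
  rw [intervalIntegral.integral_eq_sub_of_hasDerivAt (fun t _ => key t)
    (Real.continuous_arsinh.intervalIntegrable 0 x)]
  simp [Real.arsinh_zero]

lemma phiStarB_eq_integral {z : ℝ} (hz : 0 ≤ z) :
    PhiStarB z = ∫ t in (0:ℝ)..z, Real.arsinh t := by
  rw [integral_arsinh_eq, PhiStarB, abs_of_nonneg hz]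

theorem phiStarB_delta_two (a : ℝ) (ha : 1 < a) (x : ℝ) :
    PhiStarB (a * x) ≤ a ^ 2 * PhiStarB x := by
  have ha0 : 0 < a := lt_trans one_pos ha
  set y := |x| with hy
  have hy0 : 0 ≤ y := abs_nonneg x
  have e1 : PhiStarB (a * x) = PhiStarB (a * y) := by
    simp only [PhiStarB, hy, abs_mul, abs_abs, abs_of_pos ha0, mul_pow, sq_abs]
  have e2 : PhiStarB x = PhiStarB y := by
    simp only [PhiStarB, hy, abs_abs, sq_abs]
  rw [e1, e2]
  have hay : 0 ≤ a * y := mul_nonneg ha0.le hy0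
  rw [phiStarB_eq_integral hay, phiStarB_eq_integral hy0]
  have hsub : ∫ t in (0:ℝ)..y, Real.arsinh (a * t)
      = a⁻¹ • ∫ t in (0:ℝ)..(a * y), Real.arsinh t := by
    simpa using intervalIntegral.integral_comp_mul_left Real.arsinh (ne_of_gt ha0) (a := 0) (b := y)
  have hint : ∫ t in (0:ℝ)..(a * y), Real.arsinh t = a * ∫ t in (0:ℝ)..y, Real.arsinh (a * t) := by
    rw [hsub, smul_eq_mul, ← mul_assoc, mul_inv_cancel₀ (ne_of_gt ha0), one_mul]
  rw [hint]
  have hmono : ∫ t in (0:ℝ)..y, Real.arsinh (a * t) ≤ ∫ t in (0:ℝ)..y, a * Real.arsinh t := by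
    apply intervalIntegral.integral_mono_on hy0
    · exact (Real.continuous_arsinh.comp (continuous_const.mul continuous_id)).intervalIntegrable 0 y
    · exact (continuous_const.mul Real.continuous_arsinh).intervalIntegrable 0 y
    · intro t ht
      exact arsinh_mul_le ha.le ht.1
  calc a * ∫ t in (0:ℝ)..y, Real.arsinh (a * t)
      ≤ a * ∫ t in (0:ℝ)..y, a * Real.arsinh t := by
        exact mul_le_mul_of_nonneg_left hmono ha0.le
    _ = a ^ 2 * ∫ t in (0:ℝ)..y, Real.arsinh t := by
        rw [intervalIntegral.integral_const_mul]; ring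
end

section
/- For all x ≥ 0, (1+x)·log(1+x) − x ≤ x·log x + 1 − log(e−1), and hence Φ*(x) < x·log x + 1 (with the convention 0·log 0 = 0). -/
open Real

private lemma hasDerivAt_aux (t : ℝ) (ht : 0 < t) :
    HasDerivAt (fun s : ℝ => s * Real.log s - (1 + s) * Real.log (1 + s) + s)
      (Real.log t - Real.log (1 + t) + 1) t := by
  have h1 : HasDerivAt (fun s : ℝ => s * Real.log s) (Real.log t + 1) t := by
    have := (hasDerivAt_id t).mul (Real.hasDerivAt_log ht.ne')
    exact this.congr_deriv (by simp [ht.ne'])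
  have h2 : HasDerivAt (fun s : ℝ => (1 + s) * Real.log (1 + s)) (Real.log (1 + t) + 1) t := by
    have hd : HasDerivAt (fun s : ℝ => 1 + s) 1 t := (hasDerivAt_id t).const_add 1
    have hl : HasDerivAt (fun s : ℝ => Real.log (1 + s)) (1 / (1 + t)) t := by
      have := (Real.hasDerivAt_log (by linarith : (1 + t) ≠ 0)).comp t hd
      simpa [Function.comp_def] using this
    have := hd.mul hl
    exact this.congr_deriv (by rw [mul_one_div_cancel (by linarith : (1 + t) ≠ 0)]; ring)
  have := (h1.sub h2).add (hasDerivAt_id t)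
  exact this.congr_deriv (by ring)

private lemma aux_nonneg (t : ℝ) (ht : 0 < t) :
    Real.log (Real.exp 1 - 1) - 1 ≤ t * Real.log t - (1 + t) * Real.log (1 + t) + t := by
  set f : ℝ → ℝ := fun s => s * Real.log s - (1 + s) * Real.log (1 + s) + s with hf
  have he2 : (2.7182818283 : ℝ) < Real.exp 1 := Real.exp_one_gt_d9
  have he : (1 : ℝ) < Real.exp 1 - 1 := by linarith
  set c : ℝ := (Real.exp 1 - 1)⁻¹ with hc
  have hc0 : 0 < c := inv_pos.mpr (by linarith)
  have hfc : f c = Real.log (Real.exp 1 - 1) - 1 := by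
    have hne : Real.exp 1 - 1 ≠ 0 := by linarith
    have h1c : 1 + c = Real.exp 1 / (Real.exp 1 - 1) := by
      rw [hc, inv_eq_one_div]
      field_simp
      ring
    have hlc : Real.log c = -Real.log (Real.exp 1 - 1) := by
      simp [hc, Real.log_inv]
    have hl1c : Real.log (1 + c) = 1 - Real.log (Real.exp 1 - 1) := by
      rw [h1c, Real.log_div (Real.exp_pos 1).ne' hne, Real.log_exp]
    have : (1 + c) = 1 + c := rfl
    simp only [hf]
    rw [hlc, hl1c]
    ring
  -- sign of derivative
  have key : ∀ y : ℝ, 0 < y → (c ≤ y ↔ 0 ≤ Real.log y - Real.log (1 + y) + 1) := by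
    intro y hy
    have h1y : (0:ℝ) < 1 + y := by linarith
    constructor
    · intro hcy
      have hey : 1 + y ≤ Real.exp 1 * y := by
        have : 1 ≤ (Real.exp 1 - 1) * y := by
          rw [hc] at hcy
          calc (1:ℝ) = (Real.exp 1 - 1) * (Real.exp 1 - 1)⁻¹ := by field_simp
          _ ≤ (Real.exp 1 - 1) * y := by
              apply mul_le_mul_of_nonneg_left hcy (by linarith)
        nlinarith
      have := Real.log_le_log h1y hey
      rw [Real.log_mul (Real.exp_pos 1).ne' hy.ne', Real.log_exp] at this
      linarith
    · intro hd
      have : Real.log (1 + y) ≤ Real.log (Real.exp 1 * y) := by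
        rw [Real.log_mul (Real.exp_pos 1).ne' hy.ne', Real.log_exp]
        linarith
      have hey : 1 + y ≤ Real.exp 1 * y :=
        (Real.log_le_log_iff h1y (by positivity)).mp this
      rw [hc, inv_le_iff_one_le_mul₀ (by linarith)]
      nlinarith
  have hcont : ∀ y : ℝ, 0 < y → ContinuousAt f y := fun y hy =>
    (hasDerivAt_aux y hy).continuousAt
  rcases le_or_gt c t with hct | htc
  · -- monotone on [c, t]
    have hmono : MonotoneOn f (Set.Icc c t) := by
      apply monotoneOn_of_deriv_nonneg (convex_Icc c t)
      · exact fun y hy => (hcont y (lt_of_lt_of_le hc0 hy.1)).continuousWithinAt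
      · intro y hy
        rw [interior_Icc] at hy
        exact (hasDerivAt_aux y (lt_of_lt_of_le hc0 hy.1.le)).differentiableAt.differentiableWithinAt
      · intro y hy
        rw [interior_Icc] at hy
        have hy0 : 0 < y := lt_of_lt_of_le hc0 hy.1.le
        rw [(hasDerivAt_aux y hy0).deriv]
        exact ((key y hy0).mp hy.1.le)
    have := hmono (Set.left_mem_Icc.mpr hct) (Set.right_mem_Icc.mpr hct) hct
    rw [hfc] at this
    exact this
  · -- antitone on [t, c]
    have hanti : AntitoneOn f (Set.Icc t c) := by
      apply antitoneOn_of_deriv_nonpos (convex_Icc t c)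
      · exact fun y hy => (hcont y (lt_of_lt_of_le ht hy.1)).continuousWithinAt
      · intro y hy
        rw [interior_Icc] at hy
        exact (hasDerivAt_aux y (lt_of_lt_of_le ht hy.1.le)).differentiableAt.differentiableWithinAt
      · intro y hy
        rw [interior_Icc] at hy
        have hy0 : 0 < y := lt_of_lt_of_le ht hy.1.le
        rw [(hasDerivAt_aux y hy0).deriv]
        by_contra hpos
        push_neg at hpos
        exact absurd ((key y hy0).mpr hpos.le) (not_le.mpr hy.2)
    have := hanti (Set.left_mem_Icc.mpr htc.le) (Set.right_mem_Icc.mpr htc.le) htc.le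
    rw [hfc] at this
    exact this

theorem phiStar_le_xlogx (x : ℝ) (hx : 0 ≤ x) :
    (1 + x) * Real.log (1 + x) - x ≤ x * Real.log x + 1 - Real.log (Real.exp 1 - 1) ∧
    (1 + x) * Real.log (1 + x) - x < x * Real.log x + 1 := by
  have he2 : (2.7182818283 : ℝ) < Real.exp 1 := Real.exp_one_gt_d9
  have hL : 0 < Real.log (Real.exp 1 - 1) := Real.log_pos (by linarith)
  have h1 : (1 + x) * Real.log (1 + x) - x ≤ x * Real.log x + 1 - Real.log (Real.exp 1 - 1) := by
    rcases eq_or_lt_of_le hx with h0 | hx0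
    · subst h0
      have hL1 : Real.log (Real.exp 1 - 1) < 1 := by
        have := Real.log_lt_log (by linarith : (0:ℝ) < Real.exp 1 - 1)
          (by linarith : Real.exp 1 - 1 < Real.exp 1)
        rwa [Real.log_exp] at this
      simp [Real.log_one]
      linarith
    · have := aux_nonneg x hx0
      linarith
  exact ⟨h1, by linarith⟩
end

section
/- Let f₀⊗f₀ be the standard Gaussian density on ℝ⁶ and let f = e^{u − K₀(u)}·(f₀⊗f₀) with E_{f₀⊗f₀}[e^{t u}] < ∞ for t in an open interval I ⊇ [0,1]. Then for every t ∈ I with t < 0 or t > 1, E_{f₀⊗f₀}[ ( ∫_{S²} (f∘A_x)/(f₀⊗f₀) σ(dx) )^t ] ≤ e^{K₀(tu) − t K₀(u)} < ∞, where σ is the uniform probability on S² and K₀(su) = log E_{f₀⊗f₀}[e^{su}]. -/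
open MeasureTheory
open scoped RealInnerProductSpace

/-- The standard Gaussian measure `f₀⊗f₀ dx` on `ℝ³ × ℝ³`. -/
noncomputable def gauss6 :
    Measure (EuclideanSpace ℝ (Fin 3) × EuclideanSpace ℝ (Fin 3)) :=
  (volume : Measure (EuclideanSpace ℝ (Fin 3) × EuclideanSpace ℝ (Fin 3))).withDensity
    (fun p => ENNReal.ofReal
      ((2 * Real.pi) ^ (-(3 : ℝ)) * Real.exp (-(‖p.1‖ ^ 2 + ‖p.2‖ ^ 2) / 2)))

/-- The collision map `A_x` on `ℝ³ × ℝ³` for a unit vector `x ∈ S²`. -/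
noncomputable def collisionMap (x : Metric.sphere (0 : EuclideanSpace ℝ (Fin 3)) 1)
    (p : EuclideanSpace ℝ (Fin 3) × EuclideanSpace ℝ (Fin 3)) :
    EuclideanSpace ℝ (Fin 3) × EuclideanSpace ℝ (Fin 3) :=
  (p.1 - ⟪(x : EuclideanSpace ℝ (Fin 3)), p.1 - p.2⟫ • (x : EuclideanSpace ℝ (Fin 3)),
   p.2 + ⟪(x : EuclideanSpace ℝ (Fin 3)), p.1 - p.2⟫ • (x : EuclideanSpace ℝ (Fin 3)))

local notation "E3" => EuclideanSpace ℝ (Fin 3)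

/-! ### Auxiliary results on the collision map -/

/-- `collisionMap x` as a linear map. -/
noncomputable def collisionLM (x : Metric.sphere (0 : E3) 1) : (E3 × E3) →ₗ[ℝ] (E3 × E3) where
  toFun := collisionMap x
  map_add' p q := by
    have h : ⟪(x : E3), (p.1 + q.1) - (p.2 + q.2)⟫
        = ⟪(x : E3), p.1 - p.2⟫ + ⟪(x : E3), q.1 - q.2⟫ := by
      rw [inner_sub_right, inner_add_right, inner_add_right, inner_sub_right, inner_sub_right]
      ring
    simp only [collisionMap, Prod.fst_add, Prod.snd_add, Prod.mk_add_mk, Prod.mk.injEq, h,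
      add_smul]
    constructor <;> abel
  map_smul' c p := by
    have h : ⟪(x : E3), c • p.1 - c • p.2⟫ = c * ⟪(x : E3), p.1 - p.2⟫ := by
      rw [inner_sub_right, inner_sub_right, real_inner_smul_right, real_inner_smul_right]
      ring
    simp only [collisionMap, Prod.smul_fst, Prod.smul_snd, Prod.smul_mk, RingHom.id_apply,
      Prod.mk.injEq, h, mul_smul, smul_sub, smul_add]

lemma collisionMap_eq_LM (x : Metric.sphere (0 : E3) 1) :
    collisionMap x = ⇑(collisionLM x) := rfl

lemma inner_self_unit (x : Metric.sphere (0 : E3) 1) : ⟪(x : E3), (x : E3)⟫ = 1 := by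
  have hx : ‖(x : E3)‖ = 1 := by
    simpa using mem_sphere_zero_iff_norm.mp x.2
  rw [real_inner_self_eq_norm_sq, hx]; norm_num

lemma collisionMap_involutive (x : Metric.sphere (0 : E3) 1) (p : E3 × E3) :
    collisionMap x (collisionMap x p) = p := by
  have hx := inner_self_unit x
  simp only [collisionMap]
  have h : ⟪(x : E3), (p.1 - ⟪(x : E3), p.1 - p.2⟫ • (x : E3))
      - (p.2 + ⟪(x : E3), p.1 - p.2⟫ • (x : E3))⟫ = -⟪(x : E3), p.1 - p.2⟫ := by
    simp only [inner_sub_right, inner_add_right, real_inner_smul_right, hx]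
    ring
  rw [h]
  ext <;> simp

lemma collisionMap_norm (x : Metric.sphere (0 : E3) 1) (p : E3 × E3) :
    ‖(collisionMap x p).1‖ ^ 2 + ‖(collisionMap x p).2‖ ^ 2 = ‖p.1‖ ^ 2 + ‖p.2‖ ^ 2 := by
  have hx := inner_self_unit x
  simp only [collisionMap]
  rw [norm_sub_sq_real, norm_add_sq_real]
  have h1 : ⟪p.1, ⟪(x : E3), p.1 - p.2⟫ • (x : E3)⟫ = ⟪(x : E3), p.1 - p.2⟫ * ⟪(x:E3), p.1⟫ := by
    rw [real_inner_smul_right, real_inner_comm p.1]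
  have h2 : ⟪p.2, ⟪(x : E3), p.1 - p.2⟫ • (x : E3)⟫ = ⟪(x : E3), p.1 - p.2⟫ * ⟪(x:E3), p.2⟫ := by
    rw [real_inner_smul_right, real_inner_comm p.2]
  have h3 : ‖⟪(x : E3), p.1 - p.2⟫ • (x : E3)‖ ^ 2 = ⟪(x : E3), p.1 - p.2⟫ ^ 2 := by
    rw [← real_inner_self_eq_norm_sq, real_inner_smul_left, real_inner_smul_right, hx]
    ring
  have h4 : ⟪(x : E3), p.1 - p.2⟫ = ⟪(x:E3), p.1⟫ - ⟪(x:E3), p.2⟫ := inner_sub_right _ _ _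
  rw [h1, h2, h3, h4]
  ring

lemma collisionMap_continuous (x : Metric.sphere (0 : E3) 1) :
    Continuous (collisionMap x) := by
  rw [collisionMap_eq_LM]
  exact (collisionLM x).continuous_of_finiteDimensional

lemma collisionMap_map_volume (x : Metric.sphere (0 : E3) 1) :
    Measure.map (collisionMap x) volume = volume := by
  haveI : (volume : Measure (E3 × E3)).IsAddHaarMeasure :=
    Measure.prod.instIsAddHaarMeasure volume volume
  have hcomp : (collisionLM x).comp (collisionLM x) = LinearMap.id :=
    LinearMap.ext (collisionMap_involutive x)
  have hsq : LinearMap.det (collisionLM x) * LinearMap.det (collisionLM x) = 1 := by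
    have := congrArg LinearMap.det hcomp
    rwa [LinearMap.det_comp, LinearMap.det_id] at this
  have habs : |(LinearMap.det (collisionLM x))⁻¹| = 1 := by
    rcases mul_self_eq_one_iff.mp hsq with h | h <;> rw [h] <;> norm_num
  have hne : LinearMap.det (collisionLM x) ≠ 0 := by
    intro h; rw [h] at hsq; norm_num at hsq
  rw [collisionMap_eq_LM,
    Measure.map_linearMap_addHaar_eq_smul_addHaar volume hne, habs]
  simp

/-- The density of `gauss6`. -/
noncomputable def gdens (p : E3 × E3) : ENNReal :=
  ENNReal.ofReal ((2 * Real.pi) ^ (-(3 : ℝ)) * Real.exp (-(‖p.1‖ ^ 2 + ‖p.2‖ ^ 2) / 2))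

lemma gdens_meas : Measurable gdens := by
  apply Measurable.ennreal_ofReal
  fun_prop

lemma gdens_pos (p : E3 × E3) : 0 < gdens p := by
  unfold gdens
  rw [ENNReal.ofReal_pos]
  positivity

lemma gdens_comp (x : Metric.sphere (0 : E3) 1) (p : E3 × E3) :
    gdens (collisionMap x p) = gdens p := by
  unfold gdens
  rw [collisionMap_norm]

lemma gauss6_eq : gauss6 = (volume : Measure (E3 × E3)).withDensity gdens := rfl

/-- `collisionMap x` preserves `gauss6`, at the level of lower integrals. -/
lemma gauss6_lintegral_comp (x : Metric.sphere (0 : E3) 1) (h : E3 × E3 → ENNReal)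
    (hh : Measurable h) :
    ∫⁻ p, h (collisionMap x p) ∂gauss6 = ∫⁻ p, h p ∂gauss6 := by
  have hA : Measurable (collisionMap x) := (collisionMap_continuous x).measurable
  rw [gauss6_eq, lintegral_withDensity_eq_lintegral_mul _ gdens_meas
    (show Measurable fun p => h (collisionMap x p) from hh.comp hA),
    lintegral_withDensity_eq_lintegral_mul _ gdens_meas hh]
  calc ∫⁻ p, (gdens * fun p => h (collisionMap x p)) p ∂volume
      = ∫⁻ p, (fun q => gdens q * h q) (collisionMap x p) ∂volume := by
        refine lintegral_congr fun p => ?_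
        simp [gdens_comp x p]
    _ = ∫⁻ q, gdens q * h q ∂(Measure.map (collisionMap x) volume) :=
        (lintegral_map (gdens_meas.mul hh) hA).symm
    _ = ∫⁻ q, (gdens * h) q ∂volume := by
        rw [collisionMap_map_volume]
        exact lintegral_congr fun q => rfl

/-! ### Jensen's inequality for the map `s ↦ s ^ t` -/

lemma exp_interp {l : ℝ} (b : ℝ) (h0 : 0 ≤ l) (h1 : l ≤ 1) :
    Real.exp (l * b) ≤ 1 + Real.exp b := by
  have h := convexOn_exp.2 (Set.mem_univ b) (Set.mem_univ 0) h0 (by linarith)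
    (by ring : l + (1 - l) = 1)
  simp only [smul_eq_mul, mul_zero, add_zero, Real.exp_zero, mul_one] at h
  nlinarith [Real.exp_pos b]

lemma jensen_rpow {α : Type*} [MeasurableSpace α] (σ : Measure α) [IsProbabilityMeasure σ]
    (v : α → ℝ) (hv : Measurable v) (t : ℝ) (ht' : t < 0 ∨ 1 < t) :
    ENNReal.ofReal ((∫ a, Real.exp (v a) ∂σ) ^ t) ≤
      ∫⁻ a, ENNReal.ofReal (Real.exp (t * v a)) ∂σ := by
  have htne : t ≠ 0 := by rcases ht' with h | h <;> intro h0 <;> rw [h0] at h <;> linarith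
  have hmtv : Measurable fun a => Real.exp (t * v a) := (hv.const_mul t).exp
  by_cases hti : Integrable (fun a => Real.exp (t * v a)) σ
  swap
  · refine le_trans le_top (le_of_eq ?_)
    symm
    by_contra hfin
    refine hti ⟨hmtv.aestronglyMeasurable, ?_⟩
    simp only [HasFiniteIntegral]
    have : ∀ a, ‖Real.exp (t * v a)‖ₑ = ENNReal.ofReal (Real.exp (t * v a)) :=
      fun a => Real.enorm_eq_ofReal (Real.exp_nonneg _)
    simp only [this]
    exact lt_top_iff_ne_top.mpr hfin
  · have hofi : ENNReal.ofReal (∫ a, Real.exp (t * v a) ∂σ)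
        = ∫⁻ a, ENNReal.ofReal (Real.exp (t * v a)) ∂σ :=
      ofReal_integral_eq_lintegral_ofReal hti (.of_forall fun a => Real.exp_nonneg _)
    rcases ht' with ht | ht
    · -- t < 0
      by_cases hei : Integrable (fun a => Real.exp (v a)) σ
      swap
      · rw [integral_undef hei, Real.zero_rpow htne]
        simp
      · -- v is integrable
        set ε : ℝ := min 1 (-t) with hε
        have hε0 : 0 < ε := lt_min one_pos (by linarith)
        have hε1 : ε ≤ 1 := min_le_left _ _
        have hεt : ε ≤ -t := min_le_right _ _
        have hvint : Integrable v σ := by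
          have hbd : ∀ a, ‖v a‖ ≤ ε⁻¹ * (2 + Real.exp (v a) + Real.exp (t * v a)) := by
            intro a
            have h1 : Real.exp (ε * v a) ≤ 1 + Real.exp (v a) := exp_interp _ hε0.le hε1
            have h2 : Real.exp (-(ε * v a)) ≤ 1 + Real.exp (t * v a) := by
              have heq : -(ε * v a) = (ε / (-t)) * (t * v a) := by
                rw [div_mul_eq_mul_div, eq_div_iff (by linarith : (-t) ≠ 0)]
                ring
              rw [heq]
              exact exp_interp _ (div_nonneg hε0.le (by linarith))
                ((div_le_one (by linarith)).mpr hεt)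
            have h3 : ε * ‖v a‖ ≤ Real.exp (ε * v a) + Real.exp (-(ε * v a)) := by
              rcases abs_cases (v a) with ⟨h, _⟩ | ⟨h, _⟩ <;> rw [Real.norm_eq_abs, h]
              · nlinarith [Real.add_one_le_exp (ε * v a), Real.exp_pos (-(ε * v a))]
              · nlinarith [Real.add_one_le_exp (-(ε * v a)), Real.exp_pos (ε * v a)]
            calc ‖v a‖ = ε⁻¹ * (ε * ‖v a‖) := by field_simp
              _ ≤ ε⁻¹ * (2 + Real.exp (v a) + Real.exp (t * v a)) := by
                  apply mul_le_mul_of_nonneg_left _ (by positivity)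
                  nlinarith
          exact Integrable.mono' ((((integrable_const (2:ℝ)).add hei).add hti).const_mul ε⁻¹)
            hv.aestronglyMeasurable (.of_forall hbd)
        have hJ1 : Real.exp (∫ a, v a ∂σ) ≤ ∫ a, Real.exp (v a) ∂σ :=
          convexOn_exp.map_integral_le Real.continuous_exp.continuousOn isClosed_univ
            (.of_forall fun _ => Set.mem_univ _) hvint hei
        have hJ2 : Real.exp (∫ a, t * v a ∂σ) ≤ ∫ a, Real.exp (t * v a) ∂σ :=
          convexOn_exp.map_integral_le Real.continuous_exp.continuousOn isClosed_univ
            (.of_forall fun _ => Set.mem_univ _) (hvint.const_mul t) hti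
        have hkey : (∫ a, Real.exp (v a) ∂σ) ^ t ≤ ∫ a, Real.exp (t * v a) ∂σ := by
          calc (∫ a, Real.exp (v a) ∂σ) ^ t
              ≤ (Real.exp (∫ a, v a ∂σ)) ^ t :=
                Real.rpow_le_rpow_of_nonpos (Real.exp_pos _) hJ1 ht.le
            _ = Real.exp ((∫ a, v a ∂σ) * t) := (Real.exp_mul _ t).symm
            _ = Real.exp (∫ a, t * v a ∂σ) := by rw [integral_const_mul, mul_comm]
            _ ≤ _ := hJ2
        rw [← hofi]
        exact ENNReal.ofReal_le_ofReal hkey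
    · -- 1 < t
      have hei : Integrable (fun a => Real.exp (v a)) σ := by
        have hbd : ∀ a, ‖Real.exp (v a)‖ ≤ 1 + Real.exp (t * v a) := by
          intro a
          rw [Real.norm_eq_abs, abs_of_pos (Real.exp_pos _)]
          have h := exp_interp (t * v a) (le_of_lt (one_div_pos.mpr (by linarith : (0:ℝ) < t)))
            ((div_le_one (by linarith)).mpr (by linarith))
          rwa [show (1 / t) * (t * v a) = v a by field_simp] at h
        exact Integrable.mono' ((integrable_const (1:ℝ)).add hti)
          hv.exp.aestronglyMeasurable (.of_forall hbd)
      have hgi : Integrable ((fun s : ℝ => s ^ t) ∘ fun a => Real.exp (v a)) σ := by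
        have : ((fun s : ℝ => s ^ t) ∘ fun a => Real.exp (v a))
            = fun a => Real.exp (t * v a) := by
          funext a
          simp only [Function.comp_apply]
          rw [← Real.exp_mul, mul_comm]
        rw [this]; exact hti
      have hJ : (∫ a, Real.exp (v a) ∂σ) ^ t ≤ ∫ a, (Real.exp (v a)) ^ t ∂σ :=
        (convexOn_rpow ht.le).map_integral_le
          (fun s _ => (Real.continuousAt_rpow_const s t (Or.inr (by linarith))).continuousWithinAt)
          isClosed_Ici (.of_forall fun a => Real.exp_nonneg _) hei hgi
      have heq : ∀ a, (Real.exp (v a)) ^ t = Real.exp (t * v a) := by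
        intro a; rw [← Real.exp_mul, mul_comm]
      rw [← hofi]
      refine ENNReal.ofReal_le_ofReal (hJ.trans (le_of_eq ?_))
      exact integral_congr_ae (.of_forall heq)

/-! ### Main theorem -/

/-- With `f = e^{u - K₀(u)}·(f₀⊗f₀)` and `K₀(su) = log E[e^{su}]`, the `t`-th moment of the
conditioned density `∫_{S²} (f∘A_x)/(f₀⊗f₀) σ(dx) = ∫_{S²} e^{u∘A_x - K₀(u)} σ(dx)` is bounded,
for `t < 0` or `t > 1` in the interval of exponential integrability, by
`e^{K₀(tu) - t·K₀(u)}`; in particular it is finite. -/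
theorem conditioning_preserves_maxexp
    (u : EuclideanSpace ℝ (Fin 3) × EuclideanSpace ℝ (Fin 3) → ℝ) (hu : Measurable u)
    (I : Set ℝ) (hIopen : IsOpen I) (hI01 : Set.Icc (0 : ℝ) 1 ⊆ I)
    (hint : ∀ t ∈ I, Integrable (fun p => Real.exp (t * u p)) gauss6)
    (K : ℝ → ℝ) (hK : ∀ s : ℝ, K s = Real.log (∫ p, Real.exp (s * u p) ∂gauss6))
    (σ : Measure (Metric.sphere (0 : EuclideanSpace ℝ (Fin 3)) 1)) [IsProbabilityMeasure σ]
    (t : ℝ) (ht : t ∈ I) (ht' : t < 0 ∨ 1 < t) :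
    ∫⁻ p, ENNReal.ofReal
        ((∫ x, Real.exp (u (collisionMap x p) - K 1) ∂σ) ^ t) ∂gauss6 ≤
      ENNReal.ofReal (Real.exp (K t - t * K 1)) := by
  haveI : SigmaFinite gauss6 := by
    rw [gauss6_eq]
    exact SigmaFinite.withDensity_of_ne_top' fun p => ENNReal.ofReal_ne_top
  -- joint continuity of the collision map
  have hjc : Continuous fun q : (E3 × E3) × Metric.sphere (0 : E3) 1 =>
      collisionMap q.2 q.1 := by
    have h1 : Continuous fun q : (E3 × E3) × Metric.sphere (0 : E3) 1 => ((q.2 : E3)) :=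
      continuous_subtype_val.comp continuous_snd
    have h2 : Continuous fun q : (E3 × E3) × Metric.sphere (0 : E3) 1 => q.1.1 - q.1.2 :=
      (continuous_fst.comp continuous_fst).sub (continuous_snd.comp continuous_fst)
    have h3 : Continuous fun q : (E3 × E3) × Metric.sphere (0 : E3) 1 =>
        (⟪(q.2 : E3), q.1.1 - q.1.2⟫ : ℝ) := h1.inner h2
    simp only [collisionMap]
    exact ((continuous_fst.comp continuous_fst).sub (h3.smul h1)).prodMk
      ((continuous_snd.comp continuous_fst).add (h3.smul h1))
  -- measurability of the integrand on the product space
  have hjm : Measurable fun q : (E3 × E3) × Metric.sphere (0 : E3) 1 =>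
      u (collisionMap q.2 q.1) := hu.comp hjc.measurable
  have hFmeas : Measurable (Function.uncurry fun (p : E3 × E3)
      (x : Metric.sphere (0 : E3) 1) =>
      ENNReal.ofReal (Real.exp (t * (u (collisionMap x p) - K 1)))) :=
    (((hjm.sub_const _).const_mul t).exp).ennreal_ofReal
  -- positivity of the moment generating function at `t`
  have hpos : 0 < ∫ p, Real.exp (t * u p) ∂gauss6 := by
    rw [integral_pos_iff_support_of_nonneg (fun p => (Real.exp_pos _).le) (hint t ht)]
    have hsupp : Function.support (fun p : E3 × E3 => Real.exp (t * u p)) = Set.univ :=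
      Set.eq_univ_of_forall fun p => (Real.exp_pos _).ne'
    rw [hsupp, gauss6_eq, withDensity_apply _ MeasurableSet.univ, Measure.restrict_univ]
    rw [lintegral_pos_iff_support gdens_meas]
    have hsupp2 : Function.support gdens = Set.univ :=
      Set.eq_univ_of_forall fun p => (gdens_pos p).ne'
    rw [hsupp2]
    haveI : (volume : Measure (E3 × E3)).IsAddHaarMeasure :=
      Measure.prod.instIsAddHaarMeasure volume volume
    exact isOpen_univ.measure_pos volume ⟨0, trivial⟩
  have hval : ∫⁻ p, ENNReal.ofReal (Real.exp (t * u p)) ∂gauss6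
      = ENNReal.ofReal (Real.exp (K t)) := by
    rw [← ofReal_integral_eq_lintegral_ofReal (hint t ht)
      (.of_forall fun p => (Real.exp_pos _).le)]
    congr 1
    rw [hK t, Real.exp_log hpos]
  calc ∫⁻ p, ENNReal.ofReal
        ((∫ x, Real.exp (u (collisionMap x p) - K 1) ∂σ) ^ t) ∂gauss6
      ≤ ∫⁻ p, ∫⁻ x, ENNReal.ofReal
          (Real.exp (t * (u (collisionMap x p) - K 1))) ∂σ ∂gauss6 := by
        refine lintegral_mono fun p => ?_
        have hcont : Continuous fun x : Metric.sphere (0 : E3) 1 => collisionMap x p :=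
          hjc.comp (Continuous.prodMk_right p)
        have hvmeas : Measurable fun x : Metric.sphere (0 : E3) 1 =>
            u (collisionMap x p) - K 1 := (hu.comp hcont.measurable).sub_const _
        exact jensen_rpow σ _ hvmeas t ht'
    _ = ∫⁻ x, ∫⁻ p, ENNReal.ofReal
          (Real.exp (t * (u (collisionMap x p) - K 1))) ∂gauss6 ∂σ :=
        lintegral_lintegral_swap hFmeas.aemeasurable
    _ = ∫⁻ _ : Metric.sphere (0 : E3) 1,
          ENNReal.ofReal (Real.exp (K t)) * ENNReal.ofReal (Real.exp (-(t * K 1))) ∂σ := by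
        refine lintegral_congr fun x => ?_
        have hexp : ∀ p : E3 × E3, ENNReal.ofReal (Real.exp (t * (u (collisionMap x p) - K 1)))
            = ENNReal.ofReal (Real.exp (t * u (collisionMap x p)))
              * ENNReal.ofReal (Real.exp (-(t * K 1))) := by
          intro p
          rw [← ENNReal.ofReal_mul (Real.exp_nonneg _), ← Real.exp_add]
          ring_nf
        simp only [hexp]
        rw [lintegral_mul_const _ (show Measurable fun p : E3 × E3 =>
          ENNReal.ofReal (Real.exp (t * u (collisionMap x p))) from
          ((hu.comp (collisionMap_continuous x).measurable).const_mul t).exp.ennreal_ofReal)]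
        rw [gauss6_lintegral_comp x _ ((hu.const_mul t).exp.ennreal_ofReal), hval]
    _ = ENNReal.ofReal (Real.exp (K t)) * ENNReal.ofReal (Real.exp (-(t * K 1))) := by
        rw [lintegral_const, measure_univ, mul_one]
    _ = ENNReal.ofReal (Real.exp (K t - t * K 1)) := by
        rw [← ENNReal.ofReal_mul (Real.exp_nonneg _), ← Real.exp_add]
        ring_nf
end
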